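/- Let G be a finite 2-edge-connected oriented graph and H1, H2 two spanning subgraphs of G, each with all connected components 2-edge-connected. If the cycle spaces of H1 and H2 (as subspaces of F(G) ⊗ Q) are equal, then H1 = H2. -/

import Mathlib

open Finset

/-- The cycle space over `ℚ` of a graph `H` (inside `F(G) ⊗ ℚ`, with `H` a spanning
subgraph of `G`): rational flows supported on the edges of `H` and satisfying
Kirchhoff's law at every vertex. -/
def cycleSpaceQ {V : Type*} [Fintype V] [DecidableEq V] (H : SimpleGraph V)
    (σ : Sym2 V → V × V) : Submodule ℚ (Sym2 V → ℚ) where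
  carrier := {a | (∀ e, a e ≠ 0 → e ∈ H.edgeSet) ∧
    ∀ v : V, ∑ e ∈ univ.filter (fun e => (σ e).1 = v), a e
           = ∑ e ∈ univ.filter (fun e => (σ e).2 = v), a e}
  zero_mem' := by simp
  add_mem' := by
    rintro a b ⟨ha1, ha2⟩ ⟨hb1, hb2⟩
    refine ⟨fun e he => ?_, fun v => ?_⟩
    · by_contra h
      exact he (by
        have h1 : a e = 0 := by_contra fun h' => h (ha1 e h')
        have h2 : b e = 0 := by_contra fun h' => h (hb1 e h')
        simp [h1, h2])
    · simp only [Pi.add_apply, Finset.sum_add_distrib, ha2 v, hb2 v]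
  smul_mem' := by
    rintro c a ⟨ha1, ha2⟩
    refine ⟨fun e he => ha1 e ?_, fun v => ?_⟩
    · intro h; apply he; simp [h]
    · simp only [Pi.smul_apply, smul_eq_mul, ← Finset.mul_sum, ha2 v]


section Aux
variable {V : Type*} [Fintype V] [DecidableEq V]

def dirFlow (σ : Sym2 V → V × V) (x y : V) : Sym2 V → ℚ :=
  fun e => if e = s(x, y) then (if (σ e).1 = x then 1 else -1) else 0

def flowDiv (σ : Sym2 V → V × V) (a : Sym2 V → ℚ) (w : V) : ℚ :=
  ∑ e ∈ univ.filter (fun e => (σ e).1 = w), a e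
    - ∑ e ∈ univ.filter (fun e => (σ e).2 = w), a e

lemma flowDiv_add (σ : Sym2 V → V × V) (a b : Sym2 V → ℚ) (w : V) :
    flowDiv σ (a + b) w = flowDiv σ a w + flowDiv σ b w := by
  simp only [flowDiv, Pi.add_apply, Finset.sum_add_distrib]; ring

lemma sum_filter_single (f : Sym2 V → ℚ) (e₀ : Sym2 V) (hf : ∀ e, e ≠ e₀ → f e = 0)
    (P : Sym2 V → Prop) [DecidablePred P] :
    ∑ e ∈ univ.filter P, f e = if P e₀ then f e₀ else 0 := by
  rw [Finset.sum_filter, Finset.sum_eq_single e₀]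
  · intro b _ hb; simp [hf b hb]
  · simp

lemma flowDiv_dirFlow (σ : Sym2 V → V × V) (hσ : ∀ e, Sym2.mk (σ e).1 (σ e).2 = e)
    {x y : V} (hxy : x ≠ y) (w : V) :
    flowDiv σ (dirFlow σ x y) w
      = (if x = w then 1 else 0) - (if y = w then 1 else 0) := by
  have hsupp : ∀ e, e ≠ s(x, y) → dirFlow σ x y e = 0 := by
    intro e he; simp [dirFlow, he]
  have hcases : σ s(x, y) = (x, y) ∨ σ s(x, y) = (y, x) := by
    have h := hσ s(x, y)
    rcases hp : σ s(x, y) with ⟨p, q⟩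
    rw [hp] at h
    dsimp only at h
    rcases Sym2.eq_iff.mp h with ⟨h1, h2⟩ | ⟨h1, h2⟩
    · left; simp [h1, h2]
    · right; simp [h1, h2]
  rw [flowDiv, sum_filter_single _ _ hsupp, sum_filter_single _ _ hsupp]
  rcases hcases with h | h <;>
    simp [dirFlow, h, hxy, hxy.symm] <;> split_ifs <;> simp_all

def walkFlow (σ : Sym2 V → V × V) {H : SimpleGraph V} :
    {u v : V} → H.Walk u v → Sym2 V → ℚ
  | _, _, SimpleGraph.Walk.nil => 0
  | _, _, SimpleGraph.Walk.cons (u := u) (v := w) _ p => dirFlow σ u w + walkFlow σ p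

lemma walkFlow_support (σ : Sym2 V → V × V) {H : SimpleGraph V} {u v : V}
    (p : H.Walk u v) (e : Sym2 V) (h : walkFlow σ p e ≠ 0) : e ∈ H.edgeSet := by
  induction p with
  | nil => simp [walkFlow] at h
  | cons hadj p ih =>
    rename_i x y z
    rw [walkFlow] at h
    by_cases hd : dirFlow σ x y e = 0
    · exact ih (by simpa [hd] using h)
    · have : e = s(x, y) := by
        by_contra hne
        exact hd (by simp [dirFlow, hne])
      rw [this]
      exact hadj

lemma flowDiv_walkFlow (σ : Sym2 V → V × V) (hσ : ∀ e, Sym2.mk (σ e).1 (σ e).2 = e)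
    {H : SimpleGraph V} {u v : V} (p : H.Walk u v) (w : V) :
    flowDiv σ (walkFlow σ p) w
      = (if u = w then 1 else 0) - (if v = w then 1 else 0) := by
  induction p with
  | nil => simp [walkFlow, flowDiv]
  | cons hadj p ih =>
    rw [walkFlow, flowDiv_add, ih, flowDiv_dirFlow σ hσ hadj.ne]
    ring

lemma mem_cycleSpaceQ (H : SimpleGraph V) (σ : Sym2 V → V × V) (a : Sym2 V → ℚ) :
    a ∈ cycleSpaceQ H σ ↔ (∀ e, a e ≠ 0 → e ∈ H.edgeSet) ∧
      ∀ v : V, ∑ e ∈ univ.filter (fun e => (σ e).1 = v), a e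
             = ∑ e ∈ univ.filter (fun e => (σ e).2 = v), a e := Iff.rfl

lemma key (σ : Sym2 V → V × V) (hσ : ∀ e, Sym2.mk (σ e).1 (σ e).2 = e) {H : SimpleGraph V}
    (hb : ∀ e, ¬ H.IsBridge e) (e : Sym2 V) :
    e ∈ H.edgeSet ↔ ∃ a ∈ cycleSpaceQ H σ, a e ≠ 0 := by
  induction e using Sym2.ind with
  | _ u v =>
    constructor
    · intro he
      have hadj : H.Adj u v := he
      have hr : (H \ SimpleGraph.fromEdgeSet {s(u, v)}).Reachable u v := by
        have := hb s(u, v)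
        rw [SimpleGraph.isBridge_iff] at this
        push_neg at this
        exact this
      obtain ⟨p⟩ := hr.symm
      set H' := H \ SimpleGraph.fromEdgeSet {s(u, v)} with hH'
      refine ⟨dirFlow σ u v + walkFlow σ p, ?_, ?_⟩
      · rw [mem_cycleSpaceQ]
        constructor
        · intro e' he'
          by_cases hd : dirFlow σ u v e' = 0
          · have hw : walkFlow σ p e' ≠ 0 := by simpa [hd] using he'
            have := walkFlow_support σ p e' hw
            exact (SimpleGraph.edgeSet_subset_edgeSet.mpr sdiff_le) this
          · have : e' = s(u, v) := by
              by_contra hne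
              exact hd (by simp [dirFlow, hne])
            rw [this]; exact he
        · intro w
          have hdiv : flowDiv σ (dirFlow σ u v + walkFlow σ p) w = 0 := by
            rw [flowDiv_add, flowDiv_dirFlow σ hσ hadj.ne, flowDiv_walkFlow σ hσ]
            ring
          rw [flowDiv] at hdiv
          linarith [hdiv]
      · have hw : walkFlow σ p s(u, v) = 0 := by
          by_contra hne
          have h' := walkFlow_support σ p _ hne
          rw [SimpleGraph.mem_edgeSet, hH', SimpleGraph.sdiff_adj] at h'
          exact h'.2 (by simp [SimpleGraph.fromEdgeSet_adj, hadj.ne])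
        simp only [Pi.add_apply, hw, add_zero, dirFlow, if_pos rfl]
        split_ifs <;> norm_num
    · rintro ⟨a, ha, hae⟩
      exact ((mem_cycleSpaceQ H σ a).mp ha).1 _ hae

end Aux

/-- Let `G` be a finite 2-edge-connected oriented graph and `H1`, `H2`
two spanning subgraphs of `G`, each with all connected components 2-edge-connected
(equivalently, bridgeless). If the cycle spaces of `H1` and `H2` (as subspaces of
`F(G) ⊗ ℚ`) are equal, then `H1 = H2`. -/
theorem stmt_18 {V : Type*} [Fintype V] [DecidableEq V] (G H1 H2 : SimpleGraph V)
    (hG : G.Connected) (hbr : ∀ e, ¬ G.IsBridge e)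
    (σ : Sym2 V → V × V) (hσ : ∀ e, Sym2.mk (σ e).1 (σ e).2 = e)
    (h1 : H1 ≤ G) (h2 : H2 ≤ G)
    (hb1 : ∀ e, ¬ H1.IsBridge e) (hb2 : ∀ e, ¬ H2.IsBridge e)
    (heq : cycleSpaceQ H1 σ = cycleSpaceQ H2 σ) :
    H1 = H2 := by
  have hedge : H1.edgeSet = H2.edgeSet := by
    ext e
    rw [key σ hσ hb1 e, key σ hσ hb2 e, heq]
  exact SimpleGraph.edgeSet_inj.mp hedge
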